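/- Let l ∈ {K, D, T, K4, KD4, S4}, let (M,a) = ({a}∪W, R, V) and (M',a') = ({a'}∪W', R', V') be flat pointed models for l+5 in which every state of M is reachable from a via R and every state of M' is reachable from a' via R', and let P be a finite set of propositional variables. Then (M,a) ∼_P (M',a') if and only if V(a)∩P = V'(a')∩P and: for every b ∈ W there is some b' ∈ W' with V(b)∩P = V'(b')∩P; for every b' ∈ W' there is some b ∈ W with V(b)∩P = V'(b')∩P; for every b ∈ W with a R b there is some b' ∈ W' with a' R' b' and V(b)∩P = V'(b')∩P; and for every b' ∈ W' with a' R' b' there is some b ∈ W with a R b and V(b)∩P = V'(b')∩P. -/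
import Mathlib


/-- Modal formulas in negation normal form, as in the paper:
φ ::= ⊥ | ⊤ | p | ¬p | φ∧φ | φ∨φ | □φ | ◇φ. -/
inductive Form : Type where
  | bot : Form
  | top : Form
  | pos : ℕ → Form
  | npos : ℕ → Form
  | and : Form → Form → Form
  | or : Form → Form → Form
  | box : Form → Form
  | dia : Form → Form
deriving DecidableEq

namespace Form

/-- Negation, defined as usual (by De Morgan dualities). -/
def neg : Form → Form
  | bot => top
  | top => bot
  | pos p => npos p
  | npos p => pos p
  | and φ ψ => or φ.neg ψ.neg
  | or φ ψ => and φ.neg ψ.neg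
  | box φ => dia φ.neg
  | dia φ => box φ.neg

/-- Implication φ → ψ, defined as usual. -/
def imp (φ ψ : Form) : Form := or φ.neg ψ

/-- Bi-implication φ ↔ ψ, defined as usual. -/
def biimp (φ ψ : Form) : Form := and (imp φ ψ) (imp ψ φ)

/-- P(φ): the set of propositional variables occurring in φ. -/
def vars : Form → Finset ℕ
  | bot => ∅
  | top => ∅
  | pos p => {p}
  | npos p => {p}
  | and φ ψ => φ.vars ∪ ψ.vars
  | or φ ψ => φ.vars ∪ ψ.vars
  | box φ => φ.vars
  | dia φ => φ.vars

/-- Modal depth. -/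
def md : Form → ℕ
  | bot => 0
  | top => 0
  | pos _ => 0
  | npos _ => 0
  | and φ ψ => max φ.md ψ.md
  | or φ ψ => max φ.md ψ.md
  | box φ => φ.md + 1
  | dia φ => φ.md + 1

/-- sub(φ): the set of subformulas of φ. -/
def subf : Form → Finset Form
  | bot => {bot}
  | top => {top}
  | pos p => {pos p}
  | npos p => {npos p}
  | and φ ψ => insert (and φ ψ) (φ.subf ∪ ψ.subf)
  | or φ ψ => insert (or φ ψ) (φ.subf ∪ ψ.subf)
  | box φ => insert (box φ) φ.subf
  | dia φ => insert (dia φ) φ.subf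

/-- s̄ub(φ) = sub(φ) ∪ {¬ψ : ψ ∈ sub(φ)}. -/
def subBar (φ : Form) : Finset Form := φ.subf ∪ φ.subf.image neg

/-- □^k φ : k nested boxes. -/
def boxIter : ℕ → Form → Form
  | 0, φ => φ
  | n + 1, φ => box (boxIter n φ)

def isDia : Form → Bool
  | dia _ => true
  | _ => false

def isBox : Form → Bool
  | box _ => true
  | _ => false

end Form

/-- Big conjunction over a finite set of formulas (⋀∅ = ⊤). -/
noncomputable def bigAnd (s : Finset Form) : Form := s.toList.foldr Form.and Form.top

/-- Big disjunction over a finite set of formulas (⋁∅ = ⊥). -/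
noncomputable def bigOr (s : Finset Form) : Form := s.toList.foldr Form.or Form.bot

/-- th(a) = ⋀ a. -/
noncomputable def th (a : Finset Form) : Form := bigAnd a

/-- A finite Kripke model: a nonempty finite set of states, an accessibility
relation and a valuation. -/
structure Model : Type 1 where
  W : Type
  nonempty : Nonempty W
  finite : Finite W
  R : W → W → Prop
  V : W → Set ℕ

/-- Satisfaction M,w ⊨ φ. -/
def Model.sat (M : Model) : M.W → Form → Prop
  | _, .bot => False
  | _, .top => True
  | w, .pos p => p ∈ M.V w
  | w, .npos p => p ∉ M.V w
  | w, .and φ ψ => M.sat w φ ∧ M.sat w ψ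
  | w, .or φ ψ => M.sat w φ ∨ M.sat w ψ
  | w, .box φ => ∀ v, M.R w v → M.sat v φ
  | w, .dia φ => ∃ v, M.R w v ∧ M.sat v φ

/-- The six base logics K, D, T, K4, KD4, S4. -/
inductive BaseLogic : Type where
  | K | D | T | K4 | KD4 | S4
deriving DecidableEq

/-- A logic: a base logic, possibly extended by axiom 5. -/
structure Logic : Type where
  base : BaseLogic
  has5 : Bool
deriving DecidableEq

def Logic.K : Logic := ⟨.K, false⟩
def Logic.D : Logic := ⟨.D, false⟩
def Logic.T : Logic := ⟨.T, false⟩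
def Logic.K4 : Logic := ⟨.K4, false⟩
def Logic.KD4 : Logic := ⟨.KD4, false⟩
def Logic.S4 : Logic := ⟨.S4, false⟩

/-- l + 5. -/
def BaseLogic.plus5 (b : BaseLogic) : Logic := ⟨b, true⟩

/-- M is a model for the logic l (frame conditions). -/
def Model.IsFor (M : Model) (l : Logic) : Prop :=
  (match l.base with
    | .K => True
    | .D => ∀ w, ∃ v, M.R w v
    | .T => ∀ w, M.R w w
    | .K4 => ∀ a b c, M.R a b → M.R b c → M.R a c
    | .KD4 => (∀ w, ∃ v, M.R w v) ∧ (∀ a b c, M.R a b → M.R b c → M.R a c)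
    | .S4 => (∀ w, M.R w w) ∧ (∀ a b c, M.R a b → M.R b c → M.R a c))
  ∧ (l.has5 = true → ∀ a b c, M.R a b → M.R a c → M.R b c)

/-- φ is satisfiable for l: satisfied at some state of some finite model for l. -/
def Satisfiable (l : Logic) (φ : Form) : Prop :=
  ∃ M : Model, M.IsFor l ∧ ∃ w : M.W, M.sat w φ

/-- φ is valid for l: satisfied at every state of every finite model for l. -/
def Valid (l : Logic) (φ : Form) : Prop :=
  ∀ M : Model, M.IsFor l → ∀ w : M.W, M.sat w φ

/-- φ is complete for l: for every ψ ∈ L(P(φ)), φ→ψ or φ→¬ψ is valid for l. -/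
def Complete (l : Logic) (φ : Form) : Prop :=
  ∀ ψ : Form, ψ.vars ⊆ φ.vars → (Valid l (φ.imp ψ) ∨ Valid l (φ.imp ψ.neg))

/-- Z is a bisimulation modulo P from M to M'. -/
def IsBisim (P : Set ℕ) (M M' : Model) (Z : M.W → M'.W → Prop) : Prop :=
  (∃ s s', Z s s') ∧
  ∀ s s', Z s s' →
    (M.V s ∩ P = M'.V s' ∩ P) ∧
    (∀ t, M.R s t → ∃ t', M'.R s' t' ∧ Z t t') ∧
    (∀ t', M'.R s' t' → ∃ t, M.R s t ∧ Z t t')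

/-- (M,a) ∼_P (M',a'). -/
def Bisimilar (P : Set ℕ) (M : Model) (a : M.W) (M' : Model) (a' : M'.W) : Prop :=
  ∃ Z, IsBisim P M M' Z ∧ Z a a'

/-- (M,a) ≡_P (M',a'): the two pointed models satisfy the same formulas of L(P). -/
def EquivP (P : Set ℕ) (M : Model) (a : M.W) (M' : Model) (a' : M'.W) : Prop :=
  ∀ φ : Form, ↑φ.vars ⊆ P → (M.sat a φ ↔ M'.sat a' φ)

/-- (M,s) is flat (for base logic l, with axiom 5): the carrier is {s}∪W and
R = R1 ∪ R2 with R1 ⊆ {s}×W, R2 an equivalence relation on W, and s ∈ W if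
l ∈ {T,S4}. -/
def Flat (l : BaseLogic) (M : Model) (s : M.W) : Prop :=
  ∃ W : Set M.W, (∀ w, w = s ∨ w ∈ W) ∧
    ∃ R1 R2 : M.W → M.W → Prop,
      (∀ x y, M.R x y ↔ (R1 x y ∨ R2 x y)) ∧
      (∀ x y, R1 x y → x = s ∧ y ∈ W) ∧
      (∀ x y, R2 x y → x ∈ W ∧ y ∈ W) ∧
      (∀ x ∈ W, R2 x x) ∧
      (∀ x y, R2 x y → R2 y x) ∧
      (∀ x y z, R2 x y → R2 y z → R2 x z) ∧
      ((l = .T ∨ l = .S4) → s ∈ W)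

/-- A maximal state for l with respect to φ: a maximally l-consistent subset
of s̄ub(φ). -/
def MaxState (l : Logic) (φ : Form) (a : Finset Form) : Prop :=
  a ⊆ φ.subBar ∧ Satisfiable l (th a) ∧ ∀ ψ ∈ φ.subf, ψ ∈ a ∨ ψ.neg ∈ a

/-- D(x) = {◇ψ : ◇ψ ∈ x}. -/
def DSet (x : Finset Form) : Finset Form := x.filter (fun ψ => ψ.isDia = true)

/-- B(x) = {□ψ : □ψ ∈ x}. -/
def BSet (x : Finset Form) : Finset Form := x.filter (fun ψ => ψ.isBox = true)

/-- A view: a parent-state and a finite set of children-states. -/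
structure View : Type where
  parent : Finset Form
  children : Finset (Finset Form)

/-- The view is with respect to φ: all its states are subsets of s̄ub(φ). -/
def View.WF (φ : Form) (S : View) : Prop :=
  S.parent ⊆ φ.subBar ∧ ∀ c ∈ S.children, c ⊆ φ.subBar

/-- A set of formulas is l-closed. -/
def LClosed (l : Logic) (P : Finset ℕ) (s : Finset Form) : Prop :=
  (∀ φ1 φ2 : Form, Form.and φ1 φ2 ∈ s → φ1 ∈ s ∧ φ2 ∈ s) ∧
  (∀ φ1 φ2 : Form, Form.or φ1 φ2 ∈ s → φ1 ∈ s ∨ φ2 ∈ s) ∧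
  ((l.base = .T ∨ l.base = .S4) → ∀ ψ : Form, Form.box ψ ∈ s → ψ ∈ s) ∧
  (∀ p ∈ P, Form.pos p ∈ s ∨ Form.npos p ∈ s)

/-- The view S is l-complete. -/
def ViewLComplete (l : Logic) (P : Finset ℕ) (S : View) : Prop :=
  LClosed l P S.parent ∧
  (∀ c ∈ S.children, LClosed l P c) ∧
  (∀ ψ : Form, Form.dia ψ ∈ S.parent → ∃ c ∈ S.children, ψ ∈ c) ∧
  (∀ ψ : Form, Form.box ψ ∈ S.parent → ∀ c ∈ S.children, ψ ∈ c) ∧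
  ((l.base = .K4 ∨ l.base = .KD4 ∨ l.base = .S4) →
    ∀ ψ : Form, Form.box ψ ∈ S.parent → ∀ c ∈ S.children, Form.box ψ ∈ c) ∧
  (l.base = .KD4 → S.children.Nonempty)

/-- The view S is consistent for l: every one of its states is consistent. -/
def ViewConsistent (l : Logic) (S : View) : Prop :=
  Satisfiable l (th S.parent) ∧ ∀ c ∈ S.children, Satisfiable l (th c)

/-- d = max{md(th(c')) : c' ∈ C(S)}. -/
noncomputable def childDepth (S : View) : ℕ := S.children.sup (fun c => (th c).md)

/-- A K-maximal child-state: a maximally K-consistent subset of s̄ub_d(φ). -/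
def KMaxChild (φ : Form) (d : ℕ) (c : Finset Form) : Prop :=
  c ⊆ φ.subBar.filter (fun ψ => ψ.md ≤ d) ∧
  Satisfiable Logic.K (th c) ∧
  ∀ ψ ∈ φ.subf, ψ.md ≤ d → (ψ ∈ c ∨ ψ.neg ∈ c)

/-- S' completes S (for logic l, with respect to φ). -/
def ViewCompletes (l : Logic) (φ : Form) (S' S : View) : Prop :=
  ViewLComplete l φ.vars S' ∧
  S.parent ⊆ S'.parent ∧
  (∀ a ∈ S.children, ∃ a' ∈ S'.children, a ⊆ a') ∧
  (l.base = .K → ∀ a' ∈ S'.children, KMaxChild φ (childDepth S') a') ∧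
  (l.base ≠ .K → ∀ a' ∈ S'.children, MaxState l φ a')

/-- The depth-0 normal form ⋀_{p∈S} p ∧ ⋀_{p∈P∖S} ¬p. -/
noncomputable def nf0 (P S : Finset ℕ) : Form :=
  Form.and (bigAnd (S.image Form.pos)) (bigAnd ((P \ S).image Form.npos))

/-- Fine's normal forms F_P^d. -/
noncomputable def NF (P : Finset ℕ) : ℕ → Set Form
  | 0 => { χ | ∃ S ⊆ P, χ = nf0 P S }
  | d + 1 => { χ | ∃ S : Finset Form, ↑S ⊆ NF P d ∧ ∃ S0 ⊆ P,
      χ = Form.and (nf0 P S0)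
            (Form.and (bigAnd (S.image Form.dia)) (Form.box (bigOr S))) }

/-- φ is complete up to its depth for l. -/
def CompleteUpToDepth (l : Logic) (φ : Form) : Prop :=
  ∀ ψ : Form, ψ.vars ⊆ φ.vars → ψ.md ≤ φ.md →
    (Valid l (φ.imp ψ) ∨ Valid l (φ.imp ψ.neg))

/-- characterization of bisimilarity modulo P between flat
pointed models for l+5 all of whose states are reachable from the point. -/
theorem stmt3 (l : BaseLogic) (P : Finset ℕ)
    (M : Model) (a : M.W) (Wset : Set M.W) (R1 R2 : M.W → M.W → Prop)
    (M' : Model) (a' : M'.W) (Wset' : Set M'.W) (R1' R2' : M'.W → M'.W → Prop)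
    (hM : M.IsFor l.plus5) (hM' : M'.IsFor l.plus5)
    -- (M,a) is flat, with carrier {a} ∪ Wset and R = R1 ∪ R2:
    (hW : ∀ w, w = a ∨ w ∈ Wset)
    (hR : ∀ x y, M.R x y ↔ (R1 x y ∨ R2 x y))
    (hR1 : ∀ x y, R1 x y → x = a ∧ y ∈ Wset)
    (hR2 : ∀ x y, R2 x y → x ∈ Wset ∧ y ∈ Wset)
    (hrefl : ∀ x ∈ Wset, R2 x x)
    (hsymm : ∀ x y, R2 x y → R2 y x)
    (htrans : ∀ x y z, R2 x y → R2 y z → R2 x z)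
    (hT : (l = BaseLogic.T ∨ l = BaseLogic.S4) → a ∈ Wset)
    -- (M',a') is flat, with carrier {a'} ∪ Wset' and R' = R1' ∪ R2':
    (hW' : ∀ w, w = a' ∨ w ∈ Wset')
    (hR' : ∀ x y, M'.R x y ↔ (R1' x y ∨ R2' x y))
    (hR1' : ∀ x y, R1' x y → x = a' ∧ y ∈ Wset')
    (hR2' : ∀ x y, R2' x y → x ∈ Wset' ∧ y ∈ Wset')
    (hrefl' : ∀ x ∈ Wset', R2' x x)
    (hsymm' : ∀ x y, R2' x y → R2' y x)
    (htrans' : ∀ x y z, R2' x y → R2' y z → R2' x z)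
    (hT' : (l = BaseLogic.T ∨ l = BaseLogic.S4) → a' ∈ Wset')
    -- every state is reachable from the distinguished point:
    (hreach : ∀ w, Relation.ReflTransGen M.R a w)
    (hreach' : ∀ w, Relation.ReflTransGen M'.R a' w) :
    Bisimilar ↑P M a M' a' ↔
      (M.V a ∩ ↑P = M'.V a' ∩ ↑P ∧
       (∀ b ∈ Wset, ∃ b' ∈ Wset', M.V b ∩ ↑P = M'.V b' ∩ ↑P) ∧
       (∀ b' ∈ Wset', ∃ b ∈ Wset, M.V b ∩ ↑P = M'.V b' ∩ ↑P) ∧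
       (∀ b ∈ Wset, M.R a b →
          ∃ b' ∈ Wset', M'.R a' b' ∧ M.V b ∩ ↑P = M'.V b' ∩ ↑P) ∧
       (∀ b' ∈ Wset', M'.R a' b' →
          ∃ b ∈ Wset, M.R a b ∧ M.V b ∩ ↑P = M'.V b' ∩ ↑P)) := by
  have heuc : ∀ x y z, M.R x y → M.R x z → M.R y z := hM.2 rfl
  have heuc' : ∀ x y z, M'.R x y → M'.R x z → M'.R y z := hM'.2 rfl
  have hsucc : ∀ x y, M.R x y → y ∈ Wset := by
    intro x y h
    rcases (hR x y).1 h with h | h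
    · exact (hR1 x y h).2
    · exact (hR2 x y h).2
  have hsucc' : ∀ x y, M'.R x y → y ∈ Wset' := by
    intro x y h
    rcases (hR' x y).1 h with h | h
    · exact (hR1' x y h).2
    · exact (hR2' x y h).2
  -- every Wset state is R2-related to some direct successor of a
  have hkey : ∀ w, Relation.ReflTransGen M.R a w → w ∈ Wset → ∃ t, M.R a t ∧ R2 t w := by
    intro w hr
    induction hr with
    | refl =>
      intro hw
      exact ⟨a, (hR a a).2 (Or.inr (hrefl a hw)), hrefl a hw⟩
    | tail h1 h2 ih =>
      intro hw
      rename_i b c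
      rcases (hR b c).1 h2 with h | h
      · obtain ⟨hb, hc⟩ := hR1 b c h
        subst hb
        exact ⟨c, h2, hrefl c hc⟩
      · obtain ⟨t, hat, htb⟩ := ih (hR2 b c h).1
        exact ⟨t, hat, htrans t b c htb h⟩
  have hkey' : ∀ w, Relation.ReflTransGen M'.R a' w → w ∈ Wset' → ∃ t, M'.R a' t ∧ R2' t w := by
    intro w hr
    induction hr with
    | refl =>
      intro hw
      exact ⟨a', (hR' a' a').2 (Or.inr (hrefl' a' hw)), hrefl' a' hw⟩
    | tail h1 h2 ih =>
      intro hw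
      rename_i b c
      rcases (hR' b c).1 h2 with h | h
      · obtain ⟨hb, hc⟩ := hR1' b c h
        subst hb
        exact ⟨c, h2, hrefl' c hc⟩
      · obtain ⟨t, hat, htb⟩ := ih (hR2' b c h).1
        exact ⟨t, hat, htrans' t b c htb h⟩
  -- any two direct successors of a are R2-related
  have hsucc2 : ∀ t u, M.R a t → M.R a u → R2 t u := by
    intro t u hat hau
    rcases (hR t u).1 (heuc a t u hat hau) with h | h
    · have ht : t = a := (hR1 t u h).1
      rcases (hR u t).1 (heuc a u t hau hat) with h2 | h2
      · have hu : u = a := (hR1 u t h2).1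
        subst ht; subst hu
        exact hrefl _ (hsucc _ _ hat)
      · exact hsymm u t h2
    · exact h
  have hsucc2' : ∀ t u, M'.R a' t → M'.R a' u → R2' t u := by
    intro t u hat hau
    rcases (hR' t u).1 (heuc' a' t u hat hau) with h | h
    · have ht : t = a' := (hR1' t u h).1
      rcases (hR' u t).1 (heuc' a' u t hau hat) with h2 | h2
      · have hu : u = a' := (hR1' u t h2).1
        subst ht; subst hu
        exact hrefl' _ (hsucc' _ _ hat)
      · exact hsymm' u t h2
    · exact h
  -- Wset is a single R2-equivalence class
  have hclass : ∀ x ∈ Wset, ∀ y ∈ Wset, R2 x y := by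
    intro x hx y hy
    obtain ⟨t, hat, htx⟩ := hkey x (hreach x) hx
    obtain ⟨u, hau, huy⟩ := hkey y (hreach y) hy
    exact htrans x t y (hsymm t x htx) (htrans t u y (hsucc2 t u hat hau) huy)
  have hclass' : ∀ x ∈ Wset', ∀ y ∈ Wset', R2' x y := by
    intro x hx y hy
    obtain ⟨t, hat, htx⟩ := hkey' x (hreach' x) hx
    obtain ⟨u, hau, huy⟩ := hkey' y (hreach' y) hy
    exact htrans' x t y (hsymm' t x htx) (htrans' t u y (hsucc2' t u hat hau) huy)
  constructor
  · rintro ⟨Z, ⟨_, hbis⟩, hZaa⟩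
    refine ⟨(hbis a a' hZaa).1, ?_, ?_, ?_, ?_⟩
    · intro b hb
      obtain ⟨t, hat, htb⟩ := hkey b (hreach b) hb
      obtain ⟨t', hat', hZt⟩ := (hbis a a' hZaa).2.1 t hat
      obtain ⟨b', hb'1, hZb⟩ := (hbis t t' hZt).2.1 b ((hR t b).2 (Or.inr htb))
      exact ⟨b', hsucc' t' b' hb'1, (hbis b b' hZb).1⟩
    · intro b' hb'
      obtain ⟨t', hat', htb'⟩ := hkey' b' (hreach' b') hb'
      obtain ⟨t, hat, hZt⟩ := (hbis a a' hZaa).2.2 t' hat'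
      obtain ⟨b, hb1, hZb⟩ := (hbis t t' hZt).2.2 b' ((hR' t' b').2 (Or.inr htb'))
      exact ⟨b, hsucc t b hb1, (hbis b b' hZb).1⟩
    · intro b hb hab
      obtain ⟨b', hb'1, hZ⟩ := (hbis a a' hZaa).2.1 b hab
      exact ⟨b', hsucc' a' b' hb'1, hb'1, (hbis b b' hZ).1⟩
    · intro b' hb' hab'
      obtain ⟨b, hb1, hZ⟩ := (hbis a a' hZaa).2.2 b' hab'
      exact ⟨b, hsucc a b hb1, hb1, (hbis b b' hZ).1⟩
  · rintro ⟨h1, h2, h3, h4, h5⟩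
    refine ⟨fun x x' => (x = a ∧ x' = a') ∨
      (x ∈ Wset ∧ x' ∈ Wset' ∧ M.V x ∩ ↑P = M'.V x' ∩ ↑P),
      ⟨⟨a, a', Or.inl ⟨rfl, rfl⟩⟩, ?_⟩, Or.inl ⟨rfl, rfl⟩⟩
    rintro s s' (⟨rfl, rfl⟩ | ⟨hs, hs', hval⟩)
    · refine ⟨h1, ?_, ?_⟩
      · intro t hat
        obtain ⟨t', ht'W, ht'R, hv⟩ := h4 t (hsucc _ t hat) hat
        exact ⟨t', ht'R, Or.inr ⟨hsucc _ t hat, ht'W, hv⟩⟩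
      · intro t' hat'
        obtain ⟨t, htW, htR, hv⟩ := h5 t' (hsucc' _ t' hat') hat'
        exact ⟨t, htR, Or.inr ⟨htW, hsucc' _ t' hat', hv⟩⟩
    · refine ⟨hval, ?_, ?_⟩
      · intro t hst
        obtain ⟨t', ht'W, hv⟩ := h2 t (hsucc s t hst)
        exact ⟨t', (hR' s' t').2 (Or.inr (hclass' s' hs' t' ht'W)),
          Or.inr ⟨hsucc s t hst, ht'W, hv⟩⟩
      · intro t' hst'
        obtain ⟨t, htW, hv⟩ := h3 t' (hsucc' s' t' hst')
        exact ⟨t, (hR s t).2 (Or.inr (hclass s hs t htW)),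
          Or.inr ⟨htW, hsucc' s' t' hst', hv⟩⟩
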